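/- arXiv:2507.00897 — 8 statements merged into one kernel-verified Lean document; each statement's English description precedes it below -/
import Mathlib

section
/- For every p ∈ ℕ with p ≥ 1 and every n ∈ ℕ, if θ = (θ_j)_{j≥0} satisfies ∑_{j≥0} |θ_j| e^{-α_{j+1}/(2p)} < ∞, then ∑_{j≥n} |θ_{j-n}| e^{-α_j/p} ≤ e^{-α_n/(2p)} · ∑_{j≥1} |θ_{j-1}| e^{-α_j/(2p)}, where (α_n) is a nonnegative increasing sequence. -/
/-- Key estimate for continuity of the convolution operator on Λ₁(α):
for p ≥ 1 and any n, ∑_{j≥n} |θ_{j-n}| e^{-α_j/p} ≤ e^{-α_n/(2p)} · ∑_{j≥1} |θ_{j-1}| e^{-α_j/(2p)}. -/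
theorem stmt_0 (α : ℕ → ℝ) (hmono : Monotone α) (hnonneg : ∀ n, 0 ≤ α n)
    (p : ℕ) (hp : 1 ≤ p) (n : ℕ) (hn : 1 ≤ n) (θ : ℕ → ℂ)
    (hsum : Summable fun j : ℕ => ‖θ j‖ * Real.exp (-(α (j + 1)) / (2 * (p : ℝ)))) :
    ∑' j : ℕ, ‖θ j‖ * Real.exp (-(α (j + n)) / (p : ℝ))
      ≤ Real.exp (-(α n) / (2 * (p : ℝ)))
        * ∑' j : ℕ, ‖θ j‖ * Real.exp (-(α (j + 1)) / (2 * (p : ℝ))) := by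
  have hp' : (0:ℝ) < p := by exact_mod_cast hp
  have key : ∀ j : ℕ, ‖θ j‖ * Real.exp (-(α (j + n)) / (p : ℝ))
      ≤ Real.exp (-(α n) / (2 * (p : ℝ))) * (‖θ j‖ * Real.exp (-(α (j + 1)) / (2 * (p : ℝ)))) := by
    intro j
    rw [mul_comm (Real.exp _), mul_assoc]
    apply mul_le_mul_of_nonneg_left _ (norm_nonneg _)
    rw [← Real.exp_add]
    apply Real.exp_le_exp.mpr
    have h1 : α n ≤ α (j + n) := hmono (Nat.le_add_left n j)
    have h2 : α (j + 1) ≤ α (j + n) := hmono (by omega)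
    have : -(α (j + n)) / (p : ℝ) = -(α (j + n)) / (2 * p) + -(α (j + n)) / (2 * p) := by
      field_simp; ring
    rw [this]
    have hd : (0:ℝ) < 2 * p := by positivity
    apply add_le_add
    · exact div_le_div_of_nonneg_right (by linarith) hd.le
    · exact div_le_div_of_nonneg_right (by linarith) hd.le
  rw [← tsum_mul_left]
  apply Summable.tsum_le_tsum key _ (hsum.mul_left _)
  apply Summable.of_nonneg_of_le (fun j => by positivity) key (hsum.mul_left _)
end

section
/- Let (α_n) be nonnegative increasing with ∑_n e^{-m₁ α_n} converging for some m₁ ∈ ℕ. If β = (β_j)_{j≥0} and ψ = (ψ_j)_{j≥0} satisfy |β_{n-1}| ≤ C₁ e^{m₂ α_n} and |ψ_{n-1}| ≤ C₂ e^{m₃ α_n} for all n (with constants C₁,C₂ > 0 and m₂,m₃ ∈ ℕ), then there is a constant C > 0 such that the convolution satisfies |(β*ψ)_{n-1}| ≤ C e^{(m₁+m₂+m₃) α_n} for all n ∈ ℕ, where (β*ψ)_m = ∑_{i=0}^m β_i ψ_{m-i}. -/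
/-- The dual (Λ_∞(α))' is closed under convolution: if |β_{n-1}| ≤ C₁ e^{m₂ α_n} and
|ψ_{n-1}| ≤ C₂ e^{m₃ α_n}, then |(β*ψ)_{n-1}| ≤ C e^{(m₁+m₂+m₃) α_n}. -/
theorem stmt_5 (α : ℕ → ℝ) (hmono : Monotone α) (hnonneg : ∀ n, 0 ≤ α n)
    (m₁ : ℕ) (hsum : Summable fun n : ℕ => Real.exp (-(m₁ : ℝ) * α (n + 1)))
    (β ψ : ℕ → ℂ) (C₁ C₂ : ℝ) (hC₁ : 0 < C₁) (hC₂ : 0 < C₂) (m₂ m₃ : ℕ)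
    (hβ : ∀ n : ℕ, 1 ≤ n → ‖β (n - 1)‖ ≤ C₁ * Real.exp ((m₂ : ℝ) * α n))
    (hψ : ∀ n : ℕ, 1 ≤ n → ‖ψ (n - 1)‖ ≤ C₂ * Real.exp ((m₃ : ℝ) * α n)) :
    ∃ C : ℝ, 0 < C ∧ ∀ n : ℕ, 1 ≤ n →
      ‖∑ i ∈ Finset.range ((n - 1) + 1), β i * ψ ((n - 1) - i)‖
        ≤ C * Real.exp (((m₁ : ℝ) + (m₂ : ℝ) + (m₃ : ℝ)) * α n) := by
  set S : ℝ := ∑' k : ℕ, Real.exp (-(m₁ : ℝ) * α (k + 1)) with hS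
  have hSpos : 0 < S :=
    Summable.tsum_pos hsum (fun i => (Real.exp_pos _).le) 0 (Real.exp_pos _)
  refine ⟨C₁ * C₂ * S, by positivity, fun n hn => ?_⟩
  have hn' : (n - 1) + 1 = n := Nat.succ_pred_eq_of_pos hn
  rw [hn']
  -- termwise bound
  have hterm : ∀ i ∈ Finset.range n, ‖β i * ψ ((n - 1) - i)‖
      ≤ C₁ * C₂ * Real.exp (((m₂ : ℝ) + m₃) * α n) := by
    intro i hi
    have hi' : i < n := Finset.mem_range.mp hi
    have h1 : ‖β i‖ ≤ C₁ * Real.exp ((m₂ : ℝ) * α n) := by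
      have := hβ (i + 1) (Nat.le_add_left 1 i)
      simp only [Nat.add_sub_cancel] at this
      refine this.trans ?_
      have : α (i + 1) ≤ α n := hmono hi'
      gcongr
    have h2 : ‖ψ ((n - 1) - i)‖ ≤ C₂ * Real.exp ((m₃ : ℝ) * α n) := by
      have := hψ (((n - 1) - i) + 1) (Nat.le_add_left 1 _)
      simp only [Nat.add_sub_cancel] at this
      refine this.trans ?_
      have hle : ((n - 1) - i) + 1 ≤ n := by omega
      have : α (((n - 1) - i) + 1) ≤ α n := hmono hle
      gcongr
    calc ‖β i * ψ ((n - 1) - i)‖ = ‖β i‖ * ‖ψ ((n - 1) - i)‖ := norm_mul _ _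
      _ ≤ (C₁ * Real.exp ((m₂ : ℝ) * α n)) * (C₂ * Real.exp ((m₃ : ℝ) * α n)) := by
          apply mul_le_mul h1 h2 (norm_nonneg _) (by positivity)
      _ = C₁ * C₂ * Real.exp (((m₂ : ℝ) + m₃) * α n) := by
          rw [add_mul, Real.exp_add]; ring
  have hsumbound : ‖∑ i ∈ Finset.range n, β i * ψ ((n - 1) - i)‖
      ≤ n * (C₁ * C₂ * Real.exp (((m₂ : ℝ) + m₃) * α n)) := by
    calc ‖∑ i ∈ Finset.range n, β i * ψ ((n - 1) - i)‖
        ≤ ∑ i ∈ Finset.range n, ‖β i * ψ ((n - 1) - i)‖ := norm_sum_le _ _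
      _ ≤ ∑ _i ∈ Finset.range n, C₁ * C₂ * Real.exp (((m₂ : ℝ) + m₃) * α n) :=
          Finset.sum_le_sum hterm
      _ = n * (C₁ * C₂ * Real.exp (((m₂ : ℝ) + m₃) * α n)) := by
          rw [Finset.sum_const, Finset.card_range, nsmul_eq_mul]
  -- n ≤ S * exp(m₁ α n)
  have hnS : (n : ℝ) ≤ S * Real.exp ((m₁ : ℝ) * α n) := by
    have hstep : (n : ℝ) * Real.exp (-(m₁ : ℝ) * α n)
        ≤ ∑ k ∈ Finset.range n, Real.exp (-(m₁ : ℝ) * α (k + 1)) := by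
      calc (n : ℝ) * Real.exp (-(m₁ : ℝ) * α n)
          = ∑ _k ∈ Finset.range n, Real.exp (-(m₁ : ℝ) * α n) := by
            rw [Finset.sum_const, Finset.card_range, nsmul_eq_mul]
        _ ≤ ∑ k ∈ Finset.range n, Real.exp (-(m₁ : ℝ) * α (k + 1)) := by
            refine Finset.sum_le_sum fun k hk => ?_
            have hk' : k < n := Finset.mem_range.mp hk
            have : α (k + 1) ≤ α n := hmono hk'
            apply Real.exp_le_exp.mpr
            have hm : (0 : ℝ) ≤ (m₁ : ℝ) := Nat.cast_nonneg _
            nlinarith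
    have htsum : ∑ k ∈ Finset.range n, Real.exp (-(m₁ : ℝ) * α (k + 1)) ≤ S :=
      Summable.sum_le_tsum _ (fun i _ => (Real.exp_pos _).le) hsum
    have h := hstep.trans htsum
    have hexp : Real.exp (-(m₁ : ℝ) * α n) = (Real.exp ((m₁ : ℝ) * α n))⁻¹ := by
      rw [← Real.exp_neg]; ring_nf
    rw [hexp] at h
    have hep : (0 : ℝ) < Real.exp ((m₁ : ℝ) * α n) := Real.exp_pos _
    calc (n : ℝ) = (n : ℝ) * (Real.exp ((m₁ : ℝ) * α n))⁻¹ * Real.exp ((m₁ : ℝ) * α n) := by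
          field_simp
      _ ≤ S * Real.exp ((m₁ : ℝ) * α n) := by
          apply mul_le_mul_of_nonneg_right h hep.le
  calc ‖∑ i ∈ Finset.range n, β i * ψ ((n - 1) - i)‖
      ≤ n * (C₁ * C₂ * Real.exp (((m₂ : ℝ) + m₃) * α n)) := hsumbound
    _ ≤ (S * Real.exp ((m₁ : ℝ) * α n)) * (C₁ * C₂ * Real.exp (((m₂ : ℝ) + m₃) * α n)) := by
        apply mul_le_mul_of_nonneg_right hnS (by positivity)
    _ = C₁ * C₂ * S * Real.exp (((m₁ : ℝ) + m₂ + m₃) * α n) := by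
        rw [show ((m₁ : ℝ) + m₂ + m₃) * α n = (m₁ : ℝ) * α n + ((m₂ : ℝ) + m₃) * α n by ring,
          Real.exp_add]
        ring
end

section
/- Let (α_n) be a nonnegative increasing sequence with α_n → ∞ and θ ∈ Λ_1(α). The convolution operator T̂_θ : Λ_1(α) → Λ_1(α) is power bounded if and only if sup_{p∈ℕ} ‖θ‖_p ≤ 1, where ‖θ‖_p = ∑_{n≥1} |θ_{n-1}| e^{-α_n/p}. -/
open Filter Topology

/-- Convolution of two sequences: (a*b)_m = ∑_{i=0}^m a_i b_{m-i}. -/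
noncomputable def conv (a b : ℕ → ℂ) : ℕ → ℂ :=
  fun m => ∑ i ∈ Finset.range (m + 1), a i * b (m - i)

/-- The p-th seminorm of Λ₁(α): ‖x‖_p = ∑_{n≥1} |x_{n-1}| e^{-α_n/p}. -/
noncomputable def lamOneNorm (α : ℕ → ℝ) (p : ℕ) (x : ℕ → ℂ) : ℝ :=
  ∑' n : ℕ, ‖x n‖ * Real.exp (-(α (n + 1)) / (p : ℝ))

/-- The convolution operator T̂_θ, acting on coordinate sequences: T̂_θ x = θ * x. -/
noncomputable def That (θ : ℕ → ℂ) : (ℕ → ℂ) → (ℕ → ℂ) := fun x => conv θ x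

lemma conv_eq_coeff (a b : ℕ → ℂ) :
    conv a b = fun m => PowerSeries.coeff m (PowerSeries.mk a * PowerSeries.mk b) := by
  funext m
  rw [PowerSeries.coeff_mul, Finset.Nat.sum_antidiagonal_eq_sum_range_succ_mk]
  simp [conv]

lemma iterate_That (θ x : ℕ → ℂ) (k : ℕ) :
    (That θ)^[k] x = fun m => PowerSeries.coeff m ((PowerSeries.mk θ)^k * PowerSeries.mk x) := by
  induction k with
  | zero => simp
  | succ k ih =>
    rw [Function.iterate_succ_apply', ih]
    show conv θ _ = _
    rw [conv_eq_coeff]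
    have : PowerSeries.mk (fun m => PowerSeries.coeff m ((PowerSeries.mk θ)^k * PowerSeries.mk x))
        = (PowerSeries.mk θ)^k * PowerSeries.mk x := by
      ext n; simp
    rw [this]
    funext m
    rw [pow_succ]
    ring_nf

lemma weight_split (α : ℕ → ℝ) (hmono : Monotone α) {p : ℕ} (hp : 1 ≤ p) {i m : ℕ} (him : i ≤ m) :
    Real.exp (-(α (m + 1)) / (p : ℝ)) ≤
      Real.exp (-(α (i + 1)) / ((2 * p : ℕ) : ℝ)) *
      Real.exp (-(α (m - i + 1)) / ((2 * p : ℕ) : ℝ)) := by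
  rw [← Real.exp_add]
  apply Real.exp_le_exp.mpr
  have hp' : (0 : ℝ) < (p : ℝ) := by exact_mod_cast hp
  have h2p : ((2 * p : ℕ) : ℝ) = 2 * (p : ℝ) := by push_cast; ring
  rw [h2p]
  have h1 : α (i + 1) ≤ α (m + 1) := hmono (by omega)
  have h2 : α (m - i + 1) ≤ α (m + 1) := hmono (by omega)
  rw [← add_div, div_le_div_iff₀ hp' (by linarith)]
  nlinarith

lemma norm_conv_le (a b : ℕ → ℂ) (m : ℕ) :
    ‖conv a b m‖ ≤ ∑ i ∈ Finset.range (m + 1), ‖a i‖ * ‖b (m - i)‖ := by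
  refine (norm_sum_le _ _).trans ?_
  apply Finset.sum_le_sum
  intro i _
  rw [norm_mul]

/-- Main estimate: summability and the Young-type bound for the convolution. -/
lemma key (α : ℕ → ℝ) (hmono : Monotone α) {p : ℕ} (hp : 1 ≤ p) (a b : ℕ → ℂ)
    (ha : Summable fun n : ℕ => ‖a n‖ * Real.exp (-(α (n + 1)) / ((2 * p : ℕ) : ℝ)))
    (hb : Summable fun n : ℕ => ‖b n‖ * Real.exp (-(α (n + 1)) / ((2 * p : ℕ) : ℝ))) :
    (Summable fun m : ℕ => ‖conv a b m‖ * Real.exp (-(α (m + 1)) / (p : ℝ))) ∧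
      lamOneNorm α p (conv a b) ≤ lamOneNorm α (2 * p) a * lamOneNorm α (2 * p) b := by
  set F : ℕ → ℝ := fun n => ‖a n‖ * Real.exp (-(α (n + 1)) / ((2 * p : ℕ) : ℝ)) with hF
  set G : ℕ → ℝ := fun n => ‖b n‖ * Real.exp (-(α (n + 1)) / ((2 * p : ℕ) : ℝ)) with hG
  have hFnn : ∀ n, 0 ≤ F n := fun n => mul_nonneg (norm_nonneg _) (Real.exp_pos _).le
  have hGnn : ∀ n, 0 ≤ G n := fun n => mul_nonneg (norm_nonneg _) (Real.exp_pos _).le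
  have hFn : (fun n => ‖F n‖) = F := by funext n; exact Real.norm_of_nonneg (hFnn n)
  have hGn : (fun n => ‖G n‖) = G := by funext n; exact Real.norm_of_nonneg (hGnn n)
  have hFs : Summable fun n => ‖F n‖ := by rw [hFn]; exact ha
  have hGs : Summable fun n => ‖G n‖ := by rw [hGn]; exact hb
  have hbound : ∀ m, ‖conv a b m‖ * Real.exp (-(α (m + 1)) / (p : ℝ)) ≤
      ∑ i ∈ Finset.range (m + 1), F i * G (m - i) := by
    intro m
    calc ‖conv a b m‖ * Real.exp (-(α (m + 1)) / (p : ℝ))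
        ≤ (∑ i ∈ Finset.range (m + 1), ‖a i‖ * ‖b (m - i)‖) * Real.exp (-(α (m + 1)) / (p : ℝ)) :=
          mul_le_mul_of_nonneg_right (norm_conv_le a b m) (Real.exp_pos _).le
      _ = ∑ i ∈ Finset.range (m + 1), ‖a i‖ * ‖b (m - i)‖ * Real.exp (-(α (m + 1)) / (p : ℝ)) :=
          Finset.sum_mul _ _ _
      _ ≤ ∑ i ∈ Finset.range (m + 1), F i * G (m - i) := by
          apply Finset.sum_le_sum
          intro i hi
          rw [Finset.mem_range] at hi
          have hw := weight_split α hmono hp (Nat.lt_succ_iff.mp hi)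
          calc ‖a i‖ * ‖b (m - i)‖ * Real.exp (-(α (m + 1)) / (p : ℝ))
              ≤ ‖a i‖ * ‖b (m - i)‖ *
                (Real.exp (-(α (i + 1)) / ((2 * p : ℕ) : ℝ)) *
                 Real.exp (-(α (m - i + 1)) / ((2 * p : ℕ) : ℝ))) :=
                mul_le_mul_of_nonneg_left hw (mul_nonneg (norm_nonneg _) (norm_nonneg _))
            _ = F i * G (m - i) := by simp only [hF, hG]; ring
  have hsum : Summable fun m => ∑ i ∈ Finset.range (m + 1), F i * G (m - i) :=
    (summable_norm_sum_mul_range_of_summable_norm hFs hGs).of_norm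
  have h1 : Summable fun m : ℕ => ‖conv a b m‖ * Real.exp (-(α (m + 1)) / (p : ℝ)) :=
    Summable.of_nonneg_of_le (fun m => mul_nonneg (norm_nonneg _) (Real.exp_pos _).le) hbound hsum
  refine ⟨h1, ?_⟩
  have h2 : lamOneNorm α p (conv a b) ≤ ∑' m, ∑ i ∈ Finset.range (m + 1), F i * G (m - i) :=
    Summable.tsum_le_tsum hbound h1 hsum
  rw [← tsum_mul_tsum_eq_tsum_sum_range_of_summable_norm hFs hGs] at h2
  exact h2

lemma lamOneNorm_nonneg (α : ℕ → ℝ) (p : ℕ) (x : ℕ → ℂ) : 0 ≤ lamOneNorm α p x :=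
  tsum_nonneg fun n => mul_nonneg (norm_nonneg _) (Real.exp_pos _).le

/-- Bound on all convolution powers of θ. -/
lemma pow_bound (α : ℕ → ℝ) (hmono : Monotone α) (hnonneg : ∀ n, 0 ≤ α n) (θ : ℕ → ℂ)
    (hθ : ∀ p : ℕ, 1 ≤ p → Summable fun n : ℕ => ‖θ n‖ * Real.exp (-(α (n + 1)) / (p : ℝ)))
    (hone : ∀ p : ℕ, 1 ≤ p → lamOneNorm α p θ ≤ 1) :
    ∀ k : ℕ, ∀ p : ℕ, 1 ≤ p →
      (Summable fun n : ℕ =>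
        ‖PowerSeries.coeff n ((PowerSeries.mk θ)^k)‖ * Real.exp (-(α (n + 1)) / (p : ℝ))) ∧
      lamOneNorm α p (fun n => PowerSeries.coeff n ((PowerSeries.mk θ)^k)) ≤ 1 := by
  intro k
  induction k with
  | zero =>
    intro p hp
    have hfun : (fun n : ℕ => ‖PowerSeries.coeff n ((PowerSeries.mk θ)^0)‖ *
        Real.exp (-(α (n + 1)) / (p : ℝ))) =
        fun n => if n = 0 then Real.exp (-(α 1) / (p : ℝ)) else 0 := by
      funext n
      rcases eq_or_ne n 0 with h | h <;> simp [h, PowerSeries.coeff_one]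
    constructor
    · rw [hfun]
      apply summable_of_ne_finset_zero (s := {0})
      intro n hn
      simp at hn
      simp [hn]
    · have : lamOneNorm α p (fun n => PowerSeries.coeff n ((PowerSeries.mk θ)^0)) =
          Real.exp (-(α 1) / (p : ℝ)) := by
        unfold lamOneNorm
        rw [show (∑' n : ℕ, ‖(fun n => PowerSeries.coeff n ((PowerSeries.mk θ)^0)) n‖ *
            Real.exp (-(α (n + 1)) / (p : ℝ))) = ∑' n : ℕ,
            (fun n => if n = 0 then Real.exp (-(α 1) / (p : ℝ)) else 0) n from by
          exact congrArg tsum hfun]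
        exact tsum_eq_single 0 (fun n hn => by simp [hn])
      rw [this]
      apply Real.exp_le_one_iff.mpr
      have hp' : (0 : ℝ) < (p : ℝ) := by exact_mod_cast hp
      rw [neg_div]
      simp only [neg_nonpos]
      exact div_nonneg (hnonneg 1) hp'.le
  | succ k ih =>
    intro p hp
    have h2p : 1 ≤ 2 * p := by omega
    have hc : (fun n : ℕ => PowerSeries.coeff n ((PowerSeries.mk θ)^(k+1))) =
        conv θ (fun n => PowerSeries.coeff n ((PowerSeries.mk θ)^k)) := by
      rw [conv_eq_coeff]
      have hmk : PowerSeries.mk (fun n : ℕ => PowerSeries.coeff n ((PowerSeries.mk θ)^k)) =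
          (PowerSeries.mk θ)^k := by ext n; simp
      rw [hmk]
      funext m
      rw [pow_succ]
      ring_nf
    have hc' : ∀ n : ℕ, PowerSeries.coeff n ((PowerSeries.mk θ)^(k+1)) =
        conv θ (fun n => PowerSeries.coeff n ((PowerSeries.mk θ)^k)) n := fun n => congrFun hc n
    have hk := key α hmono hp θ (fun n => PowerSeries.coeff n ((PowerSeries.mk θ)^k))
      (hθ (2 * p) h2p) (ih (2 * p) h2p).1
    constructor
    · simp only [hc']
      exact hk.1
    · rw [hc]
      refine hk.2.trans ?_
      refine le_trans (mul_le_mul (hone (2 * p) h2p) (ih (2 * p) h2p).2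
        (lamOneNorm_nonneg _ _ _) zero_le_one) (by norm_num)

/-- The convolution operator T̂_θ : Λ₁(α) → Λ₁(α) is power bounded iff
sup_p ‖θ‖_p ≤ 1. -/
theorem stmt_11 (α : ℕ → ℝ) (hmono : Monotone α) (hnonneg : ∀ n, 0 ≤ α n)
    (hα : Tendsto α atTop atTop) (θ : ℕ → ℂ)
    (hθ : ∀ p : ℕ, 1 ≤ p → Summable fun n : ℕ => ‖θ n‖ * Real.exp (-(α (n + 1)) / (p : ℝ))) :
    (∀ p : ℕ, 1 ≤ p → ∃ q : ℕ, 1 ≤ q ∧ ∀ k : ℕ, ∀ x : ℕ → ℂ,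
        (∀ r : ℕ, 1 ≤ r → Summable fun n : ℕ => ‖x n‖ * Real.exp (-(α (n + 1)) / (r : ℝ))) →
        lamOneNorm α p ((That θ)^[k] x) ≤ lamOneNorm α q x)
      ↔ ∀ p : ℕ, 1 ≤ p → lamOneNorm α p θ ≤ 1 := by
  constructor
  · intro h p hp
    obtain ⟨q, hq, H⟩ := h p hp
    set e0 : ℕ → ℂ := fun n => if n = 0 then 1 else 0 with he0def
    have he0 : ∀ r : ℕ, 1 ≤ r →
        Summable fun n : ℕ => ‖e0 n‖ * Real.exp (-(α (n + 1)) / (r : ℝ)) := by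
      intro r _
      apply summable_of_ne_finset_zero (s := {0})
      intro n hn
      simp at hn
      simp [he0def, hn]
    have hT : (That θ)^[1] e0 = θ := by
      funext m
      simp only [Function.iterate_one]
      show conv θ e0 m = θ m
      unfold conv
      rw [Finset.sum_eq_single m]
      · simp [he0def]
      · intro i hi hne
        rw [Finset.mem_range] at hi
        have : m - i ≠ 0 := by omega
        simp [he0def, this]
      · intro hm
        simp at hm
    have := H 1 e0 he0
    rw [hT] at this
    refine this.trans ?_
    have : lamOneNorm α q e0 = Real.exp (-(α 1) / (q : ℝ)) := by
      unfold lamOneNorm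
      rw [tsum_eq_single 0 (fun n hn => by simp [he0def, hn])]
      simp [he0def]
    rw [this]
    apply Real.exp_le_one_iff.mpr
    have hq' : (0 : ℝ) < (q : ℝ) := by exact_mod_cast hq
    rw [neg_div]
    simp only [neg_nonpos]
    exact div_nonneg (hnonneg 1) hq'.le
  · intro hone p hp
    refine ⟨2 * p, by omega, fun k x hx => ?_⟩
    have h2p : 1 ≤ 2 * p := by omega
    have hck := pow_bound α hmono hnonneg θ hθ hone k (2 * p) h2p
    have hiter : (That θ)^[k] x =
        conv (fun n => PowerSeries.coeff n ((PowerSeries.mk θ)^k)) x := by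
      rw [iterate_That, conv_eq_coeff]
      have hmk : PowerSeries.mk (fun n : ℕ => PowerSeries.coeff n ((PowerSeries.mk θ)^k)) =
          (PowerSeries.mk θ)^k := by ext n; simp
      rw [hmk]
    rw [hiter]
    have hk := key α hmono hp (fun n => PowerSeries.coeff n ((PowerSeries.mk θ)^k)) x
      hck.1 (hx (2 * p) h2p)
    refine hk.2.trans ?_
    calc lamOneNorm α (2 * p) (fun n => PowerSeries.coeff n ((PowerSeries.mk θ)^k)) *
          lamOneNorm α (2 * p) x ≤ 1 * lamOneNorm α (2 * p) x :=
        mul_le_mul_of_nonneg_right hck.2 (lamOneNorm_nonneg _ _ _)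
      _ = lamOneNorm α (2 * p) x := one_mul _
end

section
/- Let (α_n) be a nonnegative increasing stable sequence (with α_{2n} ≤ M α_n) and θ ∈ Λ_∞(α). If for every p ∈ ℕ there exists q ∈ ℕ such that ‖θ^{*k}‖_p ≤ e^{q α_1} for all k ∈ ℕ, then T̂_θ : Λ_∞(α) → Λ_∞(α) is power bounded; conversely, power boundedness of T̂_θ implies that for every p there exists q with ‖θ^{*k}‖_p ≤ e^{q α_1} for all k. -/
/-- k-fold convolution power of a sequence (k = 0 gives the unit δ). -/
noncomputable def convPow (a : ℕ → ℂ) : ℕ → (ℕ → ℂ)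
  | 0 => fun m => if m = 0 then 1 else 0
  | k + 1 => conv a (convPow a k)

/-- The p-th seminorm of Λ_∞(α): ‖x‖_p = ∑_{n≥1} |x_{n-1}| e^{p α_n}. -/
noncomputable def lamInfNorm (α : ℕ → ℝ) (p : ℕ) (x : ℕ → ℂ) : ℝ :=
  ∑' n : ℕ, ‖x n‖ * Real.exp ((p : ℝ) * α (n + 1))

lemma mk_conv (a b : ℕ → ℂ) :
    PowerSeries.mk (conv a b) = PowerSeries.mk a * PowerSeries.mk b := by
  ext n
  rw [PowerSeries.coeff_mk, PowerSeries.coeff_mul,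
    Finset.Nat.sum_antidiagonal_eq_sum_range_succ_mk]
  simp [conv]

lemma conv_assoc (a b c : ℕ → ℂ) : conv (conv a b) c = conv a (conv b c) := by
  have h : PowerSeries.mk (conv (conv a b) c) = PowerSeries.mk (conv a (conv b c)) := by
    rw [mk_conv, mk_conv, mk_conv, mk_conv, mul_assoc]
  funext n
  have := congrArg (fun φ => PowerSeries.coeff n φ) h
  simpa using this

lemma conv_delta (x : ℕ → ℂ) :
    conv (fun m => if m = 0 then (1 : ℂ) else 0) x = x := by
  funext m
  rw [conv, Finset.sum_eq_single 0]
  · simp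
  · intro i _ hne; simp [hne]
  · simp

lemma That_iter (θ : ℕ → ℂ) (k : ℕ) (x : ℕ → ℂ) :
    (That θ)^[k] x = conv (convPow θ k) x := by
  induction k with
  | zero => simpa [convPow] using (conv_delta x).symm
  | succ k ih =>
    rw [Function.iterate_succ_apply', ih]
    show conv θ (conv (convPow θ k) x) = conv (convPow θ (k + 1)) x
    rw [convPow, conv_assoc]

/-- The weight inequality from stability. -/
lemma weight_le (α : ℕ → ℝ) (hmono : Monotone α) (hnonneg : ∀ n, 0 ≤ α n)
    (M : ℕ) (hM : ∀ n, α (2 * n) ≤ (M : ℝ) * α n) (p n i : ℕ) (hi : i ≤ n) :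
    (p : ℝ) * α (n + 1) ≤ ((M * p : ℕ) : ℝ) * α (i + 1) + ((M * p : ℕ) : ℝ) * α (n - i + 1) := by
  push_cast
  rcases le_or_gt (n - i) i with h | h
  · have h1 : n + 1 ≤ 2 * (i + 1) := by omega
    have h2 : α (n + 1) ≤ (M : ℝ) * α (i + 1) :=
      le_trans (hmono h1) (hM (i + 1))
    have h3 : (p : ℝ) * α (n + 1) ≤ (p : ℝ) * ((M : ℝ) * α (i + 1)) :=
      mul_le_mul_of_nonneg_left h2 (by positivity)
    nlinarith [hnonneg (n - i + 1), mul_nonneg (mul_nonneg (by positivity : (0:ℝ) ≤ (M:ℝ)) (by positivity : (0:ℝ) ≤ (p:ℝ))) (hnonneg (n - i + 1))]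
  · have h1 : n + 1 ≤ 2 * (n - i + 1) := by omega
    have h2 : α (n + 1) ≤ (M : ℝ) * α (n - i + 1) :=
      le_trans (hmono h1) (hM (n - i + 1))
    have h3 : (p : ℝ) * α (n + 1) ≤ (p : ℝ) * ((M : ℝ) * α (n - i + 1)) :=
      mul_le_mul_of_nonneg_left h2 (by positivity)
    nlinarith [hnonneg (i + 1), mul_nonneg (mul_nonneg (by positivity : (0:ℝ) ≤ (M:ℝ)) (by positivity : (0:ℝ) ≤ (p:ℝ))) (hnonneg (i + 1))]

/-- Key estimate: summability and norm bound for convolution. -/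
lemma conv_est (α : ℕ → ℝ) (hmono : Monotone α) (hnonneg : ∀ n, 0 ≤ α n)
    (M : ℕ) (hM : ∀ n, α (2 * n) ≤ (M : ℝ) * α n) (a b : ℕ → ℂ) (p : ℕ)
    (ha : Summable fun n : ℕ => ‖a n‖ * Real.exp (((M * p : ℕ) : ℝ) * α (n + 1)))
    (hb : Summable fun n : ℕ => ‖b n‖ * Real.exp (((M * p : ℕ) : ℝ) * α (n + 1))) :
    (Summable fun n : ℕ => ‖conv a b n‖ * Real.exp ((p : ℝ) * α (n + 1))) ∧
      lamInfNorm α p (conv a b) ≤ lamInfNorm α (M * p) a * lamInfNorm α (M * p) b := by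
  set f : ℕ → ℝ := fun n => ‖a n‖ * Real.exp (((M * p : ℕ) : ℝ) * α (n + 1)) with hf
  set g : ℕ → ℝ := fun n => ‖b n‖ * Real.exp (((M * p : ℕ) : ℝ) * α (n + 1)) with hg
  have hf0 : ∀ n, 0 ≤ f n := fun n => by positivity
  have hg0 : ∀ n, 0 ≤ g n := fun n => by positivity
  have hfn : Summable fun n => ‖f n‖ := by
    refine ha.congr fun n => ?_
    rw [Real.norm_of_nonneg (hf0 n)]
  have hgn : Summable fun n => ‖g n‖ := by
    refine hb.congr fun n => ?_
    rw [Real.norm_of_nonneg (hg0 n)]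
  have hS : Summable fun n => ∑ k ∈ Finset.range (n + 1), f k * g (n - k) := by
    refine (summable_norm_sum_mul_range_of_summable_norm hfn hgn).congr fun n => ?_
    exact Real.norm_of_nonneg (Finset.sum_nonneg fun i _ => mul_nonneg (hf0 i) (hg0 _))
  have hpt : ∀ n, ‖conv a b n‖ * Real.exp ((p : ℝ) * α (n + 1)) ≤
      ∑ k ∈ Finset.range (n + 1), f k * g (n - k) := by
    intro n
    have h1 : ‖conv a b n‖ ≤ ∑ k ∈ Finset.range (n + 1), ‖a k‖ * ‖b (n - k)‖ := by
      refine le_trans (norm_sum_le _ _) ?_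
      exact le_of_eq (Finset.sum_congr rfl fun i _ => norm_mul _ _)
    calc ‖conv a b n‖ * Real.exp ((p : ℝ) * α (n + 1))
        ≤ (∑ k ∈ Finset.range (n + 1), ‖a k‖ * ‖b (n - k)‖) * Real.exp ((p : ℝ) * α (n + 1)) := by
          exact mul_le_mul_of_nonneg_right h1 (Real.exp_pos _).le
      _ = ∑ k ∈ Finset.range (n + 1),
            ‖a k‖ * ‖b (n - k)‖ * Real.exp ((p : ℝ) * α (n + 1)) := by
          rw [Finset.sum_mul]
      _ ≤ ∑ k ∈ Finset.range (n + 1), f k * g (n - k) := by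
          refine Finset.sum_le_sum fun i hi => ?_
          have hile : i ≤ n := Nat.lt_succ_iff.mp (Finset.mem_range.mp hi)
          have hw := weight_le α hmono hnonneg M hM p n i hile
          have hw' : Real.exp ((p : ℝ) * α (n + 1)) ≤
              Real.exp (((M * p : ℕ) : ℝ) * α (i + 1)) *
              Real.exp (((M * p : ℕ) : ℝ) * α (n - i + 1)) := by
            rw [← Real.exp_add]
            exact Real.exp_le_exp.mpr hw
          calc ‖a i‖ * ‖b (n - i)‖ * Real.exp ((p : ℝ) * α (n + 1))
              ≤ ‖a i‖ * ‖b (n - i)‖ *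
                (Real.exp (((M * p : ℕ) : ℝ) * α (i + 1)) *
                 Real.exp (((M * p : ℕ) : ℝ) * α (n - i + 1))) := by
                exact mul_le_mul_of_nonneg_left hw' (by positivity)
            _ = f i * g (n - i) := by rw [hf, hg]; ring
  have hsum : Summable fun n => ‖conv a b n‖ * Real.exp ((p : ℝ) * α (n + 1)) :=
    Summable.of_nonneg_of_le (fun n => by positivity) hpt hS
  refine ⟨hsum, ?_⟩
  have h2 : lamInfNorm α p (conv a b) ≤ ∑' n, ∑ k ∈ Finset.range (n + 1), f k * g (n - k) :=
    Summable.tsum_le_tsum hpt hsum hS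
  rwa [← tsum_mul_tsum_eq_tsum_sum_range_of_summable_norm hfn hgn] at h2

lemma convPow_summable (α : ℕ → ℝ) (hmono : Monotone α) (hnonneg : ∀ n, 0 ≤ α n)
    (M : ℕ) (hM : ∀ n, α (2 * n) ≤ (M : ℝ) * α n) (θ : ℕ → ℂ)
    (hθ : ∀ p : ℕ, Summable fun n : ℕ => ‖θ n‖ * Real.exp ((p : ℝ) * α (n + 1)))
    (k p : ℕ) :
    Summable fun n : ℕ => ‖convPow θ k n‖ * Real.exp ((p : ℝ) * α (n + 1)) := by
  induction k generalizing p with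
  | zero =>
    refine summable_of_ne_finset_zero (s := {0}) fun n hn => ?_
    have : n ≠ 0 := by simpa using hn
    simp [convPow, this]
  | succ k ih =>
    exact (conv_est α hmono hnonneg M hM θ (convPow θ k) p (hθ (M * p)) (ih (M * p))).1

lemma lamInf_mono (α : ℕ → ℝ) (hnonneg : ∀ n, 0 ≤ α n) (p q : ℕ) (hpq : p ≤ q) (x : ℕ → ℂ)
    (hx : Summable fun n : ℕ => ‖x n‖ * Real.exp ((q : ℝ) * α (n + 1))) :
    lamInfNorm α p x ≤ lamInfNorm α q x := by
  have hpt : ∀ n, ‖x n‖ * Real.exp ((p : ℝ) * α (n + 1)) ≤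
      ‖x n‖ * Real.exp ((q : ℝ) * α (n + 1)) := by
    intro n
    have : (p : ℝ) * α (n + 1) ≤ (q : ℝ) * α (n + 1) :=
      mul_le_mul_of_nonneg_right (by exact_mod_cast hpq) (hnonneg _)
    exact mul_le_mul_of_nonneg_left (Real.exp_le_exp.mpr this) (norm_nonneg _)
  exact Summable.tsum_le_tsum hpt (Summable.of_nonneg_of_le (fun n => by positivity) hpt hx) hx

/-- For a stable sequence α and θ ∈ Λ_∞(α), the convolution operator
T̂_θ : Λ_∞(α) → Λ_∞(α) is power bounded iff for every p there is q with
‖θ^{*k}‖_p ≤ ‖e₁‖_q = e^{q α₁} for all k ≥ 1. -/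
theorem stmt_12 (α : ℕ → ℝ) (hmono : Monotone α) (hnonneg : ∀ n, 0 ≤ α n)
    (M : ℕ) (hM : ∀ n, α (2 * n) ≤ (M : ℝ) * α n) (θ : ℕ → ℂ)
    (hθ : ∀ p : ℕ, Summable fun n : ℕ => ‖θ n‖ * Real.exp ((p : ℝ) * α (n + 1))) :
    (∀ p : ℕ, ∃ q : ℕ, ∀ k : ℕ, 1 ≤ k →
        lamInfNorm α p (convPow θ k) ≤ Real.exp ((q : ℝ) * α 1))
      ↔ (∀ p : ℕ, ∃ q : ℕ, ∀ k : ℕ, ∀ x : ℕ → ℂ,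
          (∀ r : ℕ, Summable fun n : ℕ => ‖x n‖ * Real.exp ((r : ℝ) * α (n + 1))) →
          lamInfNorm α p ((That θ)^[k] x) ≤ lamInfNorm α q x) := by
  constructor
  · intro H p
    obtain ⟨q', hq'⟩ := H (M * p)
    refine ⟨p + (M * p + q'), ?_⟩
    intro k x hx
    rcases Nat.eq_zero_or_pos k with rfl | hk
    · simpa using lamInf_mono α hnonneg p _ (by omega) x (hx _)
    · rw [That_iter]
      have h1 := (conv_est α hmono hnonneg M hM (convPow θ k) x p
        (convPow_summable α hmono hnonneg M hM θ hθ k (M * p)) (hx (M * p))).2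
      have h2 : lamInfNorm α (M * p) (convPow θ k) * lamInfNorm α (M * p) x ≤
          Real.exp ((q' : ℝ) * α 1) * lamInfNorm α (M * p) x := by
        refine mul_le_mul_of_nonneg_right (hq' k hk) ?_
        exact tsum_nonneg fun n => by positivity
      have h3 : Real.exp ((q' : ℝ) * α 1) * lamInfNorm α (M * p) x ≤
          lamInfNorm α (q' + M * p) x := by
        rw [lamInfNorm, lamInfNorm, ← (hx (M * p)).tsum_mul_left]
        have hpt : ∀ n, Real.exp ((q' : ℝ) * α 1) *
            (‖x n‖ * Real.exp (((M * p : ℕ) : ℝ) * α (n + 1))) ≤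
            ‖x n‖ * Real.exp (((q' + M * p : ℕ) : ℝ) * α (n + 1)) := by
          intro n
          have hα : α 1 ≤ α (n + 1) := hmono (by omega)
          have : Real.exp ((q' : ℝ) * α 1) *
              Real.exp (((M * p : ℕ) : ℝ) * α (n + 1)) ≤
              Real.exp (((q' + M * p : ℕ) : ℝ) * α (n + 1)) := by
            rw [← Real.exp_add, Real.exp_le_exp]
            push_cast
            nlinarith [mul_le_mul_of_nonneg_left hα (by positivity : (0:ℝ) ≤ (q':ℝ))]
          calc Real.exp ((q' : ℝ) * α 1) *
              (‖x n‖ * Real.exp (((M * p : ℕ) : ℝ) * α (n + 1)))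
              = ‖x n‖ * (Real.exp ((q' : ℝ) * α 1) *
                Real.exp (((M * p : ℕ) : ℝ) * α (n + 1))) := by ring
            _ ≤ ‖x n‖ * Real.exp (((q' + M * p : ℕ) : ℝ) * α (n + 1)) :=
                mul_le_mul_of_nonneg_left this (norm_nonneg _)
        exact Summable.tsum_le_tsum hpt ((hx (M * p)).mul_left _) (hx (q' + M * p))
      have h4 : lamInfNorm α (q' + M * p) x ≤ lamInfNorm α (p + (M * p + q')) x :=
        lamInf_mono α hnonneg _ _ (by omega) x (hx _)
      linarith
  · intro H p
    obtain ⟨q, hq⟩ := H p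
    refine ⟨q, fun k hk1 => ?_⟩
    set δ : ℕ → ℂ := fun m => if m = 0 then 1 else 0 with hδ
    have hδs : ∀ r : ℕ, Summable fun n : ℕ => ‖δ n‖ * Real.exp ((r : ℝ) * α (n + 1)) := by
      intro r
      refine summable_of_ne_finset_zero (s := {0}) fun n hn => ?_
      have : n ≠ 0 := by simpa using hn
      simp [hδ, this]
    clear hk1
    have hiter : (That θ)^[k] δ = convPow θ k := by
      induction k with
      | zero => simp [convPow, hδ]
      | succ k ih => rw [Function.iterate_succ_apply', ih]; rfl
    have hδnorm : lamInfNorm α q δ = Real.exp ((q : ℝ) * α 1) := by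
      rw [lamInfNorm, tsum_eq_single 0 (fun b hb => by simp [hδ, hb])]
      simp [hδ]
    calc lamInfNorm α p (convPow θ k) = lamInfNorm α p ((That θ)^[k] δ) := by rw [hiter]
      _ ≤ lamInfNorm α q δ := hq k δ hδs
      _ = Real.exp ((q : ℝ) * α 1) := hδnorm
end

section
/- Let (α_n) be nonnegative increasing with ∑_n e^{-m₁ α_n} < ∞ for some m₁ ∈ ℕ, and let β satisfy |β_{n-1}| ≤ C₀ e^{m₀ α_n} for all n. Then the dual convolution operator Ť_β e_n = ∑_{j=1}^n β_{n-j} e_j on Λ_∞(α) satisfies ‖Ť_β e_n‖_p ≤ C₀ D ‖e_n‖_{p+m₀+m₁} for every p, n ∈ ℕ, where D = ∑_j e^{-m₁ α_j}. Hence Ť_β : Λ_∞(α) → Λ_∞(α) is continuous. -/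
/-- For α nonnegative increasing with ∑ e^{-m₁ α_n} < ∞ and |β_{n-1}| ≤ C₀ e^{m₀ α_n},
the dual convolution operator on Λ_∞(α) satisfies
‖Ť_β e_n‖_p ≤ C₀ D ‖e_n‖_{p+m₀+m₁} with D = ∑_j e^{-m₁ α_j};
hence Ť_β : Λ_∞(α) → Λ_∞(α) is continuous. -/
theorem stmt_14 (α : ℕ → ℝ) (hmono : Monotone α) (hnonneg : ∀ n, 0 ≤ α n)
    (m₁ : ℕ) (hsum : Summable fun n : ℕ => Real.exp (-(m₁ : ℝ) * α (n + 1)))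
    (β : ℕ → ℂ) (m₀ : ℕ) (C₀ : ℝ) (hC₀ : 0 < C₀)
    (hβ : ∀ n : ℕ, 1 ≤ n → ‖β (n - 1)‖ ≤ C₀ * Real.exp ((m₀ : ℝ) * α n)) :
    ∀ p n : ℕ, 1 ≤ n →
      ∑ j ∈ Finset.Icc 1 n, ‖β (n - j)‖ * Real.exp ((p : ℝ) * α j)
        ≤ C₀ * (∑' j : ℕ, Real.exp (-(m₁ : ℝ) * α (j + 1)))
            * Real.exp (((p : ℝ) + (m₀ : ℝ) + (m₁ : ℝ)) * α n) := by
  intro p n hn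
  set E : ℝ := Real.exp (((p : ℝ) + (m₀ : ℝ) + (m₁ : ℝ)) * α n) with hE
  have hterm : ∀ j ∈ Finset.Icc 1 n,
      ‖β (n - j)‖ * Real.exp ((p : ℝ) * α j)
        ≤ C₀ * E * Real.exp (-(m₁ : ℝ) * α j) := by
    intro j hj
    simp only [Finset.mem_Icc] at hj
    obtain ⟨hj1, hjn⟩ := hj
    have h1 : ‖β (n - j)‖ ≤ C₀ * Real.exp ((m₀ : ℝ) * α n) := by
      have hb := hβ (n - j + 1) (by omega)
      have he : n - j + 1 - 1 = n - j := by omega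
      rw [he] at hb
      refine hb.trans ?_
      have : ((m₀ : ℝ)) * α (n - j + 1) ≤ (m₀ : ℝ) * α n :=
        mul_le_mul_of_nonneg_left (hmono (by omega)) (Nat.cast_nonneg _)
      exact mul_le_mul_of_nonneg_left (Real.exp_le_exp.2 this) hC₀.le
    have h2 : Real.exp ((p : ℝ) * α j)
        ≤ Real.exp ((p : ℝ) * α n + (m₁ : ℝ) * α n - (m₁ : ℝ) * α j) := by
      apply Real.exp_le_exp.2
      have hp : (p : ℝ) * α j ≤ (p : ℝ) * α n :=
        mul_le_mul_of_nonneg_left (hmono hjn) (Nat.cast_nonneg _)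
      have hm : (m₁ : ℝ) * α j ≤ (m₁ : ℝ) * α n :=
        mul_le_mul_of_nonneg_left (hmono hjn) (Nat.cast_nonneg _)
      linarith
    calc ‖β (n - j)‖ * Real.exp ((p : ℝ) * α j)
        ≤ (C₀ * Real.exp ((m₀ : ℝ) * α n)) *
            Real.exp ((p : ℝ) * α n + (m₁ : ℝ) * α n - (m₁ : ℝ) * α j) :=
          mul_le_mul h1 h2 (Real.exp_nonneg _) (by positivity)
      _ = C₀ * E * Real.exp (-(m₁ : ℝ) * α j) := by
          rw [hE, mul_assoc, mul_assoc, ← Real.exp_add, ← Real.exp_add]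
          ring_nf
  have hsumb : ∑ j ∈ Finset.Icc 1 n, Real.exp (-(m₁ : ℝ) * α j)
      ≤ ∑' j : ℕ, Real.exp (-(m₁ : ℝ) * α (j + 1)) := by
    have hre : ∑ j ∈ Finset.Icc 1 n, Real.exp (-(m₁ : ℝ) * α j)
        = ∑ i ∈ Finset.range n, Real.exp (-(m₁ : ℝ) * α (i + 1)) := by
      rw [← Finset.Ico_add_one_right_eq_Icc, Finset.sum_Ico_eq_sum_range]
      simp [add_comm]
    rw [hre]
    exact Summable.sum_le_tsum _ (fun i _ => (Real.exp_nonneg _)) hsum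
  calc ∑ j ∈ Finset.Icc 1 n, ‖β (n - j)‖ * Real.exp ((p : ℝ) * α j)
      ≤ ∑ j ∈ Finset.Icc 1 n, C₀ * E * Real.exp (-(m₁ : ℝ) * α j) :=
        Finset.sum_le_sum hterm
    _ = C₀ * E * ∑ j ∈ Finset.Icc 1 n, Real.exp (-(m₁ : ℝ) * α j) := by
        rw [Finset.mul_sum]
    _ ≤ C₀ * E * ∑' j : ℕ, Real.exp (-(m₁ : ℝ) * α (j + 1)) := by
        apply mul_le_mul_of_nonneg_left hsumb (by positivity)
    _ = C₀ * (∑' j : ℕ, Real.exp (-(m₁ : ℝ) * α (j + 1))) * E := by ring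
end

section
/- Let (α_n) be nonnegative increasing with ∑_n e^{-m₁ α_n} < ∞ for some m₁, and let β be a sequence with |β_{n-1}| ≤ C e^{m α_n} for some C, m. Suppose that for every p ∈ ℕ there exists q ∈ ℕ such that for every k ∈ ℕ there is L_{k,p} > 0 with |β^{*k}_{n-1}| ≤ L_{k,p} e^{q α_n} for all n. Then for every p ∈ ℕ there exist q' ∈ ℕ and, for each k, a constant M_{k,p} > 0 such that ‖Ť_β^k e_n‖_p ≤ M_{k,p} e^{q' α_n} for all n; i.e., the dual convolution operator Ť_β on Λ_∞(α) is topologizable. Conversely, topologizability of Ť_β implies the stated growth condition on the convolution powers β^{*k}. -/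
lemma growth_aux (α : ℕ → ℝ) (hmono : Monotone α)
    (m₁ : ℕ) (hsum : Summable fun n : ℕ => Real.exp (-(m₁ : ℝ) * α (n + 1))) :
    ∀ n : ℕ, (n : ℝ) ≤ (∑' i : ℕ, Real.exp (-(m₁ : ℝ) * α (i + 1))) *
      Real.exp ((m₁ : ℝ) * α n) := by
  intro n
  set S := ∑' i : ℕ, Real.exp (-(m₁ : ℝ) * α (i + 1)) with hS
  have h1 : (n : ℝ) * Real.exp (-(m₁ : ℝ) * α n) ≤ S := by
    have hle : ∀ i ∈ Finset.range n, Real.exp (-(m₁ : ℝ) * α n)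
        ≤ Real.exp (-(m₁ : ℝ) * α (i + 1)) := by
      intro i hi
      apply Real.exp_le_exp.2
      have : α (i + 1) ≤ α n := hmono (Finset.mem_range.1 hi)
      nlinarith [Nat.cast_nonneg (α := ℝ) m₁]
    calc (n : ℝ) * Real.exp (-(m₁ : ℝ) * α n)
        = (Finset.range n).card • Real.exp (-(m₁ : ℝ) * α n) := by
          simp [nsmul_eq_mul]
      _ ≤ ∑ i ∈ Finset.range n, Real.exp (-(m₁ : ℝ) * α (i + 1)) :=
          Finset.card_nsmul_le_sum _ _ _ hle
      _ ≤ S := Summable.sum_le_tsum _ (fun i _ => (Real.exp_pos _).le) hsum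
  have := mul_le_mul_of_nonneg_right h1 (Real.exp_pos ((m₁ : ℝ) * α n)).le
  calc (n : ℝ) = (n : ℝ) * Real.exp (-(m₁ : ℝ) * α n) * Real.exp ((m₁ : ℝ) * α n) := by
        rw [mul_assoc, ← Real.exp_add]; simp
    _ ≤ S * Real.exp ((m₁ : ℝ) * α n) := this

/-- The dual convolution operator Ť_β on Λ_∞(α) is topologizable (checked on the
basis: Ť_β^k e_n = Ť_{β^{*k}} e_n = ∑_{j=1}^n β^{*k}_{n-j} e_j) iff for every p
there is q such that for every k there is L_{k,p} > 0 with
|β^{*k}_{n-1}| ≤ L_{k,p} e^{q α_n} for all n. -/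
theorem stmt_15 (α : ℕ → ℝ) (hmono : Monotone α) (hnonneg : ∀ n, 0 ≤ α n)
    (m₁ : ℕ) (hsum : Summable fun n : ℕ => Real.exp (-(m₁ : ℝ) * α (n + 1)))
    (β : ℕ → ℂ) (m : ℕ) (C : ℝ) (hC : 0 < C)
    (hβ : ∀ n : ℕ, 1 ≤ n → ‖β (n - 1)‖ ≤ C * Real.exp ((m : ℝ) * α n)) :
    (∀ p : ℕ, ∃ q : ℕ, ∀ k : ℕ, 1 ≤ k → ∃ L : ℝ, 0 < L ∧
        ∀ n : ℕ, 1 ≤ n → ‖convPow β k (n - 1)‖ ≤ L * Real.exp ((q : ℝ) * α n))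
      ↔ (∀ p : ℕ, ∃ q' : ℕ, ∀ k : ℕ, 1 ≤ k → ∃ Mk : ℝ, 0 < Mk ∧
          ∀ n : ℕ, 1 ≤ n →
            ∑ j ∈ Finset.Icc 1 n, ‖convPow β k (n - j)‖ * Real.exp ((p : ℝ) * α j)
              ≤ Mk * Real.exp ((q' : ℝ) * α n)) := by
  set S := ∑' i : ℕ, Real.exp (-(m₁ : ℝ) * α (i + 1)) with hSdef
  have hSpos : 0 < S := Summable.tsum_pos hsum (fun i => (Real.exp_pos _).le) 0 (Real.exp_pos _)
  constructor
  · intro H p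
    obtain ⟨q, hq⟩ := H p
    refine ⟨p + q + m₁, fun k hk => ?_⟩
    obtain ⟨L, hLpos, hL⟩ := hq k hk
    refine ⟨L * S, mul_pos hLpos hSpos, fun n hn => ?_⟩
    have term_bound : ∀ j ∈ Finset.Icc 1 n,
        ‖convPow β k (n - j)‖ * Real.exp ((p : ℝ) * α j)
          ≤ L * Real.exp (((q : ℝ) + p) * α n) := by
      intro j hj
      obtain ⟨hj1, hjn⟩ := Finset.mem_Icc.1 hj
      have hidx : ‖convPow β k (n - j)‖ ≤ L * Real.exp ((q : ℝ) * α (n - j + 1)) := by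
        have := hL (n - j + 1) (Nat.le_add_left 1 _)
        simpa using this
      have h2 : Real.exp ((q : ℝ) * α (n - j + 1)) ≤ Real.exp ((q : ℝ) * α n) := by
        apply Real.exp_le_exp.2
        have : α (n - j + 1) ≤ α n := hmono (by omega)
        nlinarith [Nat.cast_nonneg (α := ℝ) q]
      have h3 : Real.exp ((p : ℝ) * α j) ≤ Real.exp ((p : ℝ) * α n) := by
        apply Real.exp_le_exp.2
        have : α j ≤ α n := hmono hjn
        nlinarith [Nat.cast_nonneg (α := ℝ) p]
      calc ‖convPow β k (n - j)‖ * Real.exp ((p : ℝ) * α j)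
          ≤ (L * Real.exp ((q : ℝ) * α n)) * Real.exp ((p : ℝ) * α n) := by
            apply mul_le_mul (hidx.trans (by nlinarith [Real.exp_pos ((q:ℝ) * α n)])) h3
              (Real.exp_pos _).le
            positivity
        _ = L * Real.exp (((q : ℝ) + p) * α n) := by
            rw [mul_assoc, ← Real.exp_add]; ring_nf
    calc ∑ j ∈ Finset.Icc 1 n, ‖convPow β k (n - j)‖ * Real.exp ((p : ℝ) * α j)
        ≤ (Finset.Icc 1 n).card • (L * Real.exp (((q : ℝ) + p) * α n)) :=
          Finset.sum_le_card_nsmul _ _ _ term_bound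
      _ = (n : ℝ) * (L * Real.exp (((q : ℝ) + p) * α n)) := by
          simp [Nat.card_Icc, nsmul_eq_mul]
      _ ≤ (S * Real.exp ((m₁ : ℝ) * α n)) * (L * Real.exp (((q : ℝ) + p) * α n)) := by
          apply mul_le_mul_of_nonneg_right (growth_aux α hmono m₁ hsum n)
          positivity
      _ = L * S * Real.exp (((p : ℝ) + q + m₁) * α n) := by
          rw [mul_mul_mul_comm, ← Real.exp_add]; ring_nf
      _ = L * S * Real.exp (((p + q + m₁ : ℕ) : ℝ) * α n) := by push_cast; ring_nf
  · intro H p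
    obtain ⟨q', hq'⟩ := H p
    refine ⟨q', fun k hk => ?_⟩
    obtain ⟨Mk, hMkpos, hMk⟩ := hq' k hk
    refine ⟨Mk, hMkpos, fun n hn => ?_⟩
    have h1 : ‖convPow β k (n - 1)‖ * Real.exp ((p : ℝ) * α 1)
        ≤ ∑ j ∈ Finset.Icc 1 n, ‖convPow β k (n - j)‖ * Real.exp ((p : ℝ) * α j) := by
      apply Finset.single_le_sum (f := fun j => ‖convPow β k (n - j)‖ * Real.exp ((p : ℝ) * α j))
        (fun j _ => by positivity) (Finset.mem_Icc.2 ⟨le_refl 1, hn⟩)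
    have h2 : 1 ≤ Real.exp ((p : ℝ) * α 1) := by
      exact Real.one_le_exp (mul_nonneg (Nat.cast_nonneg p) (hnonneg 1))
    nlinarith [hMk n hn, norm_nonneg (convPow β k (n - 1))]
end

section
/- Let θ ∈ Λ_1(n) (exponent sequence α_n = n). The convolution operator T̂_θ e_n = ∑_{j≥n} θ_{j-n} e_j satisfies ‖T̂_θ e_n‖_p ≤ e^{1/(2p)} ‖θ‖_{2p} ‖e_n‖_p for every p, n ∈ ℕ, where ‖x‖_p = ∑_j |x_j| e^{-j/p}; hence T̂_θ is strongly tame on Λ_1(n). -/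
/-- For θ ∈ Λ₁(n) (α_n = n), the convolution operator satisfies
‖T̂_θ e_n‖_p = ∑_{j≥n} |θ_{j-n}| e^{-j/p} ≤ e^{1/(2p)} ‖θ‖_{2p} ‖e_n‖_p;
hence T̂_θ is strongly tame on Λ₁(n). -/
theorem stmt_18 (θ : ℕ → ℂ)
    (hθ : ∀ p : ℕ, 1 ≤ p →
      Summable fun i : ℕ => ‖θ i‖ * Real.exp (-((i : ℝ) + 1) / (p : ℝ))) :
    ∀ p n : ℕ, 1 ≤ p → 1 ≤ n →
      ∑' i : ℕ, ‖θ i‖ * Real.exp (-((i : ℝ) + (n : ℝ)) / (p : ℝ))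
        ≤ Real.exp (1 / (2 * (p : ℝ)))
            * (∑' i : ℕ, ‖θ i‖ * Real.exp (-((i : ℝ) + 1) / (2 * (p : ℝ))))
            * Real.exp (-(n : ℝ) / (p : ℝ)) := by
  intro p n hp hn
  have hp0 : (0:ℝ) < (p : ℝ) := by exact_mod_cast hp.trans_lt' (by norm_num)
  have hb : Summable fun i : ℕ => ‖θ i‖ * Real.exp (-((i : ℝ) + 1) / (2 * (p : ℝ))) := by
    have := hθ (2 * p) (by omega)
    convert this using 3
    push_cast; ring
  have key : ∀ i : ℕ, ‖θ i‖ * Real.exp (-((i : ℝ) + (n : ℝ)) / (p : ℝ))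
      ≤ Real.exp (1 / (2 * (p : ℝ)))
        * (‖θ i‖ * Real.exp (-((i : ℝ) + 1) / (2 * (p : ℝ))))
        * Real.exp (-(n : ℝ) / (p : ℝ)) := by
    intro i
    have h1 : Real.exp (1 / (2 * (p : ℝ)))
        * (‖θ i‖ * Real.exp (-((i : ℝ) + 1) / (2 * (p : ℝ))))
        * Real.exp (-(n : ℝ) / (p : ℝ))
        = ‖θ i‖ * Real.exp (-(i : ℝ) / (2 * (p : ℝ)) + -(n : ℝ) / (p : ℝ)) := by
      rw [Real.exp_add]
      rw [show -(i : ℝ) / (2 * (p : ℝ)) = 1 / (2 * (p : ℝ)) + -((i : ℝ) + 1) / (2 * (p : ℝ)) by ring]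
      rw [Real.exp_add]; ring
    have h2 : ‖θ i‖ * Real.exp (-((i : ℝ) + (n : ℝ)) / (p : ℝ))
        = ‖θ i‖ * Real.exp (-(i : ℝ) / (p : ℝ) + -(n : ℝ) / (p : ℝ)) := by
      congr 1
      rw [show -((i : ℝ) + (n:ℝ)) / (p : ℝ) = -(i : ℝ) / (p : ℝ) + -(n : ℝ) / (p : ℝ) by ring]
    rw [h1, h2]
    apply mul_le_mul_of_nonneg_left _ (norm_nonneg _)
    apply Real.exp_le_exp.2
    have : -(i : ℝ) / (p : ℝ) ≤ -(i : ℝ) / (2 * (p : ℝ)) := by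
      rw [div_le_div_iff₀ hp0 (by linarith)]
      nlinarith [Nat.cast_nonneg (α := ℝ) i]
    linarith
  have hsum2 : Summable fun i : ℕ => Real.exp (1 / (2 * (p : ℝ)))
      * (‖θ i‖ * Real.exp (-((i : ℝ) + 1) / (2 * (p : ℝ))))
      * Real.exp (-(n : ℝ) / (p : ℝ)) := by
    exact (hb.mul_left _).mul_right _
  have hsum1 : Summable fun i : ℕ => ‖θ i‖ * Real.exp (-((i : ℝ) + (n : ℝ)) / (p : ℝ)) := by
    apply Summable.of_nonneg_of_le (fun i => by positivity) key hsum2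
  calc ∑' i : ℕ, ‖θ i‖ * Real.exp (-((i : ℝ) + (n : ℝ)) / (p : ℝ))
      ≤ ∑' i : ℕ, Real.exp (1 / (2 * (p : ℝ)))
          * (‖θ i‖ * Real.exp (-((i : ℝ) + 1) / (2 * (p : ℝ))))
          * Real.exp (-(n : ℝ) / (p : ℝ)) := Summable.tsum_le_tsum key hsum1 hsum2
    _ = _ := by
        rw [mul_assoc, ← tsum_mul_right, ← tsum_mul_left]
        exact tsum_congr fun i => by ring
end

section
/- Let β be a sequence with B := ∑_{n=1}^∞ |β_{n-1}| e^n < ∞. Then the dual convolution operator Ť_β e_n = ∑_{j=1}^n β_{n-j} e_j on Λ_1(n) satisfies ‖Ť_β e_n‖_p ≤ B ‖e_n‖_p for all p, n ∈ ℕ, where ‖x‖_p = ∑_j |x_j| e^{-j/p}; hence Ť_β is strongly tame. Consequently, if θ ∈ Λ_1(n) and sup_p e^{1/(2p)}‖θ‖_{2p} + ∑_n |β_{n-1}| e^n ≤ 1, then the Toeplitz operator T_{θ,β} = T̂_θ + Ť_β on Λ_1(n) is power bounded. -/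
/-- The p-th seminorm of Λ₁(n): ‖x‖_p = ∑_{j≥1} |x_{j-1}| e^{-j/p}. -/
noncomputable def lamOneNNorm (p : ℕ) (x : ℕ → ℂ) : ℝ :=
  ∑' j : ℕ, ‖x j‖ * Real.exp (-((j : ℝ) + 1) / (p : ℝ))

/-- The Toeplitz operator T_{θ,β} = T̂_θ + Ť_β acting on coordinate sequences
(0-indexed): (T_{θ,β} x)_m = ∑_{i=0}^m θ_{m-i} x_i + ∑_{i≥0} β_i x_{m+i}. -/
noncomputable def Toep (θ β : ℕ → ℂ) : (ℕ → ℂ) → (ℕ → ℂ) :=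
  fun x m => (∑ i ∈ Finset.range (m + 1), θ (m - i) * x i) + ∑' i : ℕ, β i * x (m + i)

private lemma aux_geom (c : ℝ) (hc : 0 < c) :
    Summable fun n : ℕ => Real.exp (-((n : ℝ) + 1) / c) := by
  have h : Summable fun n : ℕ => Real.exp ((n : ℝ) * (-1 / c)) :=
    Real.summable_exp_nat_mul_iff.mpr (by
      apply div_neg_of_neg_of_pos _ hc; norm_num)
  refine (h.mul_right (Real.exp (-1 / c))).congr fun n => ?_
  rw [← Real.exp_add]
  congr 1
  field_simp
  ring

set_option maxHeartbeats 1000000 in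
private lemma toep_contract (β θ : ℕ → ℂ)
    (hB : Summable fun n : ℕ => ‖β n‖ * Real.exp ((n : ℝ) + 1))
    (hθ : ∀ p : ℕ, 1 ≤ p → Summable fun i : ℕ => ‖θ i‖ * Real.exp (-((i : ℝ) + 1) / (p : ℝ)))
    (hsm : ∀ p : ℕ, 1 ≤ p →
        Real.exp (1 / (2 * (p : ℝ)))
            * (∑' i : ℕ, ‖θ i‖ * Real.exp (-((i : ℝ) + 1) / (2 * (p : ℝ))))
          + (∑' i : ℕ, ‖β i‖ * Real.exp ((i : ℝ) + 1)) ≤ 1)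
    (x : ℕ → ℂ)
    (hx : ∀ r : ℕ, 1 ≤ r → Summable fun j : ℕ => ‖x j‖ * Real.exp (-((j : ℝ) + 1) / (r : ℝ)))
    (r : ℕ) (hr : 1 ≤ r) :
    (Summable fun j : ℕ => ‖Toep θ β x j‖ * Real.exp (-((j : ℝ) + 1) / (r : ℝ)))
      ∧ lamOneNNorm r (Toep θ β x) ≤ lamOneNNorm r x := by
  have hR1 : (1:ℝ) ≤ (r:ℝ) := by exact_mod_cast hr
  have hR0 : (0:ℝ) < (r:ℝ) := lt_of_lt_of_le one_pos hR1
  -- θ at double index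
  have hθ2 : Summable fun i : ℕ => ‖θ i‖ * Real.exp (-((i : ℝ) + 1) / (2 * (r : ℝ))) := by
    refine (hθ (2 * r) (by omega)).congr fun i => ?_
    push_cast
    ring_nf
  have hx2 : Summable fun j : ℕ => ‖x j‖ * Real.exp (-((j : ℝ) + 1) / (2 * (r : ℝ))) := by
    refine (hx (2 * r) (by omega)).congr fun j => ?_
    push_cast
    ring_nf
  -- the θ convolution kernel
  have hfLe : ∀ d : ℕ, ‖θ d‖ * Real.exp (-(d : ℝ) / (r : ℝ))
      ≤ Real.exp (1 / (2 * (r : ℝ))) * (‖θ d‖ * Real.exp (-((d : ℝ) + 1) / (2 * (r : ℝ)))) := by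
    intro d
    have h1 : Real.exp (1 / (2 * (r:ℝ))) * (‖θ d‖ * Real.exp (-((d:ℝ)+1) / (2*(r:ℝ))))
        = ‖θ d‖ * Real.exp (-(d:ℝ) / (2*(r:ℝ))) := by
      rw [mul_left_comm, ← Real.exp_add]
      congr 1
      field_simp
      congr 1
      ring
    rw [h1]
    apply mul_le_mul_of_nonneg_left _ (norm_nonneg _)
    apply Real.exp_le_exp.mpr
    have h2 : (d:ℝ) / (2*(r:ℝ)) ≤ (d:ℝ) / (r:ℝ) :=
      div_le_div_of_nonneg_left (Nat.cast_nonneg d) hR0 (by linarith)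
    rw [neg_div, neg_div]
    linarith
  have hfS : Summable fun d : ℕ => ‖θ d‖ * Real.exp (-(d : ℝ) / (r : ℝ)) :=
    Summable.of_nonneg_of_le (fun d => by positivity) hfLe (hθ2.mul_left _)
  have hfA : (∑' d : ℕ, ‖θ d‖ * Real.exp (-(d : ℝ) / (r : ℝ)))
      ≤ Real.exp (1 / (2 * (r : ℝ)))
          * (∑' i : ℕ, ‖θ i‖ * Real.exp (-((i : ℝ) + 1) / (2 * (r : ℝ)))) := by
    rw [← tsum_mul_left]
    exact Summable.tsum_le_tsum hfLe hfS (hθ2.mul_left _)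
  have hg : Summable fun j : ℕ => ‖x j‖ * Real.exp (-((j : ℝ) + 1) / (r : ℝ)) := hx r hr
  have hfN : Summable fun d : ℕ => ‖‖θ d‖ * Real.exp (-(d : ℝ) / (r : ℝ))‖ :=
    hfS.congr fun d => (Real.norm_of_nonneg (by positivity)).symm
  have hgN : Summable fun j : ℕ => ‖‖x j‖ * Real.exp (-((j : ℝ) + 1) / (r : ℝ))‖ :=
    hg.congr fun j => (Real.norm_of_nonneg (by positivity)).symm
  -- Cauchy product
  have hCa : Summable fun m : ℕ => ∑ k ∈ Finset.range (m + 1),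
      (‖θ k‖ * Real.exp (-(k : ℝ) / (r : ℝ)))
        * (‖x (m - k)‖ * Real.exp (-(((m - k : ℕ) : ℝ) + 1) / (r : ℝ))) :=
    (summable_norm_sum_mul_range_of_summable_norm hfN hgN).of_norm
  have hCv : (∑' d : ℕ, ‖θ d‖ * Real.exp (-(d : ℝ) / (r : ℝ)))
        * (∑' j : ℕ, ‖x j‖ * Real.exp (-((j : ℝ) + 1) / (r : ℝ)))
      = ∑' m : ℕ, ∑ k ∈ Finset.range (m + 1),
          (‖θ k‖ * Real.exp (-(k : ℝ) / (r : ℝ)))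
            * (‖x (m - k)‖ * Real.exp (-(((m - k : ℕ) : ℝ) + 1) / (r : ℝ))) :=
    tsum_mul_tsum_eq_tsum_sum_range_of_summable_norm hfN hgN
  -- rewriting the θ-part
  have ha_eq : ∀ m : ℕ, (∑ i ∈ Finset.range (m + 1), ‖θ (m - i)‖ * ‖x i‖)
        * Real.exp (-((m : ℝ) + 1) / (r : ℝ))
      = ∑ k ∈ Finset.range (m + 1),
          (‖θ k‖ * Real.exp (-(k : ℝ) / (r : ℝ)))
            * (‖x (m - k)‖ * Real.exp (-(((m - k : ℕ) : ℝ) + 1) / (r : ℝ))) := by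
    intro m
    rw [Finset.sum_mul, ← Finset.sum_range_reflect (fun k =>
      (‖θ k‖ * Real.exp (-(k : ℝ) / (r : ℝ)))
        * (‖x (m - k)‖ * Real.exp (-(((m - k : ℕ) : ℝ) + 1) / (r : ℝ)))) (m + 1)]
    apply Finset.sum_congr rfl
    intro i hi
    have him : i ≤ m := Nat.lt_succ_iff.mp (Finset.mem_range.mp hi)
    have hk : m + 1 - 1 - i = m - i := by omega
    rw [hk]
    have hmi : m - (m - i) = i := Nat.sub_sub_self him
    rw [hmi]
    have hc : ((m - i : ℕ) : ℝ) = (m : ℝ) - (i : ℝ) := by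
      push_cast [him]
      ring
    rw [hc, mul_mul_mul_comm, ← Real.exp_add]
    congr 2
    ring
  have ha_s : Summable fun m : ℕ => (∑ i ∈ Finset.range (m + 1), ‖θ (m - i)‖ * ‖x i‖)
      * Real.exp (-((m : ℝ) + 1) / (r : ℝ)) :=
    hCa.congr fun m => (ha_eq m).symm
  have ha_val : (∑' m : ℕ, (∑ i ∈ Finset.range (m + 1), ‖θ (m - i)‖ * ‖x i‖)
        * Real.exp (-((m : ℝ) + 1) / (r : ℝ)))
      ≤ (Real.exp (1 / (2 * (r : ℝ)))
          * (∑' i : ℕ, ‖θ i‖ * Real.exp (-((i : ℝ) + 1) / (2 * (r : ℝ)))))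
        * lamOneNNorm r x := by
    calc (∑' m : ℕ, (∑ i ∈ Finset.range (m + 1), ‖θ (m - i)‖ * ‖x i‖)
          * Real.exp (-((m : ℝ) + 1) / (r : ℝ)))
        = ∑' m : ℕ, ∑ k ∈ Finset.range (m + 1),
            (‖θ k‖ * Real.exp (-(k : ℝ) / (r : ℝ)))
              * (‖x (m - k)‖ * Real.exp (-(((m - k : ℕ) : ℝ) + 1) / (r : ℝ))) :=
          tsum_congr ha_eq
      _ = (∑' d : ℕ, ‖θ d‖ * Real.exp (-(d : ℝ) / (r : ℝ)))
            * (∑' j : ℕ, ‖x j‖ * Real.exp (-((j : ℝ) + 1) / (r : ℝ))) := hCv.symm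
      _ ≤ _ := by
          apply mul_le_mul_of_nonneg_right hfA
          exact tsum_nonneg fun j => by positivity
  -- β part
  set Bc : ℝ := ∑' i : ℕ, ‖β i‖ * Real.exp ((i : ℝ) + 1) with hBc_def
  set Cc : ℝ := ∑' j : ℕ, ‖x j‖ * Real.exp (-((j : ℝ) + 1) / (2 * (r : ℝ))) with hCc_def
  have hBc0 : 0 ≤ Bc := tsum_nonneg fun i => by positivity
  have hCc0 : 0 ≤ Cc := tsum_nonneg fun j => by positivity
  have hβle : ∀ i : ℕ, ‖β i‖ ≤ Bc * Real.exp (-((i : ℝ) + 1)) := by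
    intro i
    have h1 : ‖β i‖ * Real.exp ((i : ℝ) + 1) ≤ Bc :=
      Summable.le_tsum hB i fun j _ => by positivity
    have h2 : ‖β i‖ = ‖β i‖ * Real.exp ((i : ℝ) + 1) * Real.exp (-((i : ℝ) + 1)) := by
      rw [mul_assoc, ← Real.exp_add]
      have h0 : (i : ℝ) + 1 + -((i : ℝ) + 1) = 0 := by ring
      rw [h0, Real.exp_zero, mul_one]
    rw [h2]
    exact mul_le_mul_of_nonneg_right h1 (Real.exp_nonneg _)
  have hxle : ∀ j : ℕ, ‖x j‖ ≤ Cc * Real.exp (((j : ℝ) + 1) / (2 * (r : ℝ))) := by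
    intro j
    have h1 : ‖x j‖ * Real.exp (-((j : ℝ) + 1) / (2 * (r : ℝ))) ≤ Cc :=
      Summable.le_tsum hx2 j fun i _ => by positivity
    have h2 : ‖x j‖ = ‖x j‖ * Real.exp (-((j : ℝ) + 1) / (2 * (r : ℝ)))
        * Real.exp (((j : ℝ) + 1) / (2 * (r : ℝ))) := by
      rw [mul_assoc, ← Real.exp_add]
      have : -((j : ℝ) + 1) / (2 * (r : ℝ)) + ((j : ℝ) + 1) / (2 * (r : ℝ)) = 0 := by ring
      rw [this, Real.exp_zero, mul_one]
    rw [h2]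
    exact mul_le_mul_of_nonneg_right h1 (Real.exp_nonneg _)
  have hdom : ∀ q : ℕ × ℕ, ‖β q.1‖ * ‖x (q.2 + q.1)‖ * Real.exp (-((q.2 : ℝ) + 1) / (r : ℝ))
      ≤ (Bc * Cc * Real.exp (-((q.1 : ℝ) + 1) / 2)) * Real.exp (-((q.2 : ℝ) + 1) / (2 * (r : ℝ))) := by
    rintro ⟨i, m⟩
    simp only
    have step1 : ‖β i‖ * ‖x (m + i)‖ * Real.exp (-((m : ℝ) + 1) / (r : ℝ))
        ≤ (Bc * Real.exp (-((i : ℝ) + 1)))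
          * (Cc * Real.exp ((((m : ℝ) + (i : ℝ)) + 1) / (2 * (r : ℝ))))
          * Real.exp (-((m : ℝ) + 1) / (r : ℝ)) := by
      apply mul_le_mul_of_nonneg_right _ (Real.exp_nonneg _)
      have hx' := hxle (m + i)
      have hcast : (((m + i : ℕ) : ℝ) + 1) / (2 * (r : ℝ)) = (((m : ℝ) + (i : ℝ)) + 1) / (2 * (r : ℝ)) := by
        push_cast
        ring
      rw [hcast] at hx'
      exact mul_le_mul (hβle i) hx' (norm_nonneg _) (by positivity)
    refine step1.trans ?_
    have e1 : (Bc * Real.exp (-((i : ℝ) + 1)))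
          * (Cc * Real.exp ((((m : ℝ) + (i : ℝ)) + 1) / (2 * (r : ℝ))))
          * Real.exp (-((m : ℝ) + 1) / (r : ℝ))
        = (Bc * Cc) * Real.exp ((-((i : ℝ) + 1))
            + ((((m : ℝ) + (i : ℝ)) + 1) / (2 * (r : ℝ)) + (-((m : ℝ) + 1) / (r : ℝ)))) := by
      rw [Real.exp_add, Real.exp_add]
      ring
    have e2 : (Bc * Cc * Real.exp (-((i : ℝ) + 1) / 2)) * Real.exp (-((m : ℝ) + 1) / (2 * (r : ℝ)))
        = (Bc * Cc) * Real.exp ((-((i : ℝ) + 1) / 2) + (-((m : ℝ) + 1) / (2 * (r : ℝ)))) := by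
      rw [Real.exp_add]
      ring
    rw [e1, e2]
    apply mul_le_mul_of_nonneg_left _ (by positivity)
    apply Real.exp_le_exp.mpr
    have key1 : (i : ℝ) / (2 * (r : ℝ)) ≤ (i : ℝ) / 2 :=
      div_le_div_of_nonneg_left (Nat.cast_nonneg i) two_pos (by linarith)
    have split : (((m : ℝ) + (i : ℝ)) + 1) / (2 * (r : ℝ))
        = ((m : ℝ) + 1) / (2 * (r : ℝ)) + (i : ℝ) / (2 * (r : ℝ)) := by ring
    have h2 : ((m : ℝ) + 1) / (2 * (r : ℝ)) + ((m : ℝ) + 1) / (2 * (r : ℝ)) = ((m : ℝ) + 1) / (r : ℝ) := by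
      field_simp
      ring
    have h3 : -((m : ℝ) + 1) / (r : ℝ) = -(((m : ℝ) + 1) / (r : ℝ)) := by ring
    have h4 : -((m : ℝ) + 1) / (2 * (r : ℝ)) = -(((m : ℝ) + 1) / (2 * (r : ℝ))) := by ring
    have h5 : -((i : ℝ) + 1) / 2 = -(((i : ℝ) + 1) / 2) := by ring
    have h6 : ((i : ℝ) + 1) / 2 ≤ (i : ℝ) + 1 - (i : ℝ) / 2 := by ring_nf; linarith
    linarith
  have hu : Summable fun q : ℕ × ℕ =>
      (Bc * Cc * Real.exp (-((q.1 : ℝ) + 1) / 2)) * Real.exp (-((q.2 : ℝ) + 1) / (2 * (r : ℝ))) :=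
    Summable.mul_of_nonneg ((aux_geom 2 two_pos).mul_left (Bc * Cc))
      (aux_geom (2 * (r : ℝ)) (by positivity)) (fun i => by positivity)
      (fun m => Real.exp_nonneg _)
  have hh : Summable fun q : ℕ × ℕ =>
      ‖β q.1‖ * ‖x (q.2 + q.1)‖ * Real.exp (-((q.2 : ℝ) + 1) / (r : ℝ)) :=
    Summable.of_nonneg_of_le (fun q => by positivity) hdom hu
  have hmarg := (summable_prod_of_nonneg (f := fun q : ℕ × ℕ =>
      ‖β q.1‖ * ‖x (q.2 + q.1)‖ * Real.exp (-((q.2 : ℝ) + 1) / (r : ℝ)))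
      (fun q => by positivity)).mp hh
  have hh' : Summable fun q : ℕ × ℕ =>
      ‖β q.2‖ * ‖x (q.1 + q.2)‖ * Real.exp (-((q.1 : ℝ) + 1) / (r : ℝ)) := by
    have := hh.prod_symm
    exact this.congr fun q => rfl
  have hmarg' := (summable_prod_of_nonneg (f := fun q : ℕ × ℕ =>
      ‖β q.2‖ * ‖x (q.1 + q.2)‖ * Real.exp (-((q.1 : ℝ) + 1) / (r : ℝ)))
      (fun q => by positivity)).mp hh'
  -- summability of ∑_i ‖β i‖ ‖x (m+i)‖ for each m
  have hβx : ∀ m : ℕ, Summable fun i : ℕ => ‖β i‖ * ‖x (m + i)‖ := by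
    intro m
    have h1 : Summable fun i : ℕ => ‖β i‖ * ‖x (m + i)‖ * Real.exp (-((m : ℝ) + 1) / (r : ℝ)) :=
      hmarg'.1 m
    have h2 := h1.mul_right (Real.exp (((m : ℝ) + 1) / (r : ℝ)))
    refine h2.congr fun i => ?_
    rw [mul_assoc, mul_assoc, ← Real.exp_add]
    have : -((m : ℝ) + 1) / (r : ℝ) + ((m : ℝ) + 1) / (r : ℝ) = 0 := by ring
    rw [this, Real.exp_zero, mul_one]
  -- inner estimate for the β part
  have hinner : ∀ i : ℕ, (∑' m : ℕ, ‖β i‖ * ‖x (m + i)‖ * Real.exp (-((m : ℝ) + 1) / (r : ℝ)))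
      ≤ ‖β i‖ * Real.exp ((i : ℝ) + 1) * lamOneNNorm r x := by
    intro i
    have hsum1 : Summable fun m : ℕ => ‖x (m + i)‖ * Real.exp (-(((m : ℝ) + (i : ℝ)) + 1) / (r : ℝ)) := by
      have h0 := hg.comp_injective (add_left_injective i)
      refine h0.congr fun m => ?_
      show ‖x (m + i)‖ * Real.exp (-(((m + i : ℕ) : ℝ) + 1) / (r : ℝ)) = _
      push_cast
      ring_nf
    have e2 : ∀ m : ℕ, ‖x (m + i)‖ * Real.exp (-((m : ℝ) + 1) / (r : ℝ))
        ≤ Real.exp ((i : ℝ) + 1)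
          * (‖x (m + i)‖ * Real.exp (-(((m : ℝ) + (i : ℝ)) + 1) / (r : ℝ))) := by
      intro m
      rw [mul_left_comm]
      apply mul_le_mul_of_nonneg_left _ (norm_nonneg _)
      rw [← Real.exp_add]
      apply Real.exp_le_exp.mpr
      have hsplit : -(((m : ℝ) + (i : ℝ)) + 1) / (r : ℝ)
          = -((m : ℝ) + 1) / (r : ℝ) - (i : ℝ) / (r : ℝ) := by ring
      have hid : (i : ℝ) / (r : ℝ) ≤ (i : ℝ) := div_le_self (Nat.cast_nonneg i) hR1
      linarith
    have hsum2 : Summable fun m : ℕ => ‖x (m + i)‖ * Real.exp (-((m : ℝ) + 1) / (r : ℝ)) :=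
      Summable.of_nonneg_of_le (fun m => by positivity) e2 (hsum1.mul_left _)
    have hle1 : (∑' m : ℕ, ‖x (m + i)‖ * Real.exp (-(((m : ℝ) + (i : ℝ)) + 1) / (r : ℝ)))
        ≤ lamOneNNorm r x := by
      apply Summable.tsum_le_tsum_of_inj (fun m => m + i) (add_left_injective i)
        (fun c _ => by positivity) (fun m => le_of_eq (by push_cast; ring_nf)) hsum1 hg
    calc (∑' m : ℕ, ‖β i‖ * ‖x (m + i)‖ * Real.exp (-((m : ℝ) + 1) / (r : ℝ)))
        = ‖β i‖ * ∑' m : ℕ, ‖x (m + i)‖ * Real.exp (-((m : ℝ) + 1) / (r : ℝ)) := by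
          rw [← tsum_mul_left]
          exact tsum_congr fun m => mul_assoc _ _ _
      _ ≤ ‖β i‖ * (Real.exp ((i : ℝ) + 1) * lamOneNNorm r x) := by
          apply mul_le_mul_of_nonneg_left _ (norm_nonneg _)
          calc (∑' m : ℕ, ‖x (m + i)‖ * Real.exp (-((m : ℝ) + 1) / (r : ℝ)))
              ≤ ∑' m : ℕ, Real.exp ((i : ℝ) + 1)
                  * (‖x (m + i)‖ * Real.exp (-(((m : ℝ) + (i : ℝ)) + 1) / (r : ℝ))) :=
                Summable.tsum_le_tsum e2 hsum2 (hsum1.mul_left _)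
            _ = Real.exp ((i : ℝ) + 1)
                  * ∑' m : ℕ, ‖x (m + i)‖ * Real.exp (-(((m : ℝ) + (i : ℝ)) + 1) / (r : ℝ)) :=
                tsum_mul_left
            _ ≤ Real.exp ((i : ℝ) + 1) * lamOneNNorm r x :=
                mul_le_mul_of_nonneg_left hle1 (Real.exp_nonneg _)
      _ = ‖β i‖ * Real.exp ((i : ℝ) + 1) * lamOneNNorm r x := by ring
  -- swap the double sum
  have hswap : (∑' m : ℕ, ∑' i : ℕ, ‖β i‖ * ‖x (m + i)‖ * Real.exp (-((m : ℝ) + 1) / (r : ℝ)))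
      = ∑' i : ℕ, ∑' m : ℕ, ‖β i‖ * ‖x (m + i)‖ * Real.exp (-((m : ℝ) + 1) / (r : ℝ)) :=
    Summable.tsum_comm' hh hmarg.1 hmarg'.1
  have hbms : Summable fun m : ℕ =>
      (∑' i : ℕ, ‖β i‖ * ‖x (m + i)‖) * Real.exp (-((m : ℝ) + 1) / (r : ℝ)) := by
    have hbms0 : Summable fun m : ℕ =>
        ∑' i : ℕ, ‖β i‖ * ‖x (m + i)‖ * Real.exp (-((m : ℝ) + 1) / (r : ℝ)) := hmarg'.2
    exact hbms0.congr fun m => tsum_mul_right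
  have hbpart : (∑' m : ℕ, (∑' i : ℕ, ‖β i‖ * ‖x (m + i)‖) * Real.exp (-((m : ℝ) + 1) / (r : ℝ)))
      ≤ Bc * lamOneNNorm r x := by
    have e3 : ∀ m : ℕ, (∑' i : ℕ, ‖β i‖ * ‖x (m + i)‖) * Real.exp (-((m : ℝ) + 1) / (r : ℝ))
        = ∑' i : ℕ, ‖β i‖ * ‖x (m + i)‖ * Real.exp (-((m : ℝ) + 1) / (r : ℝ)) := fun m =>
      tsum_mul_right.symm
    calc (∑' m : ℕ, (∑' i : ℕ, ‖β i‖ * ‖x (m + i)‖) * Real.exp (-((m : ℝ) + 1) / (r : ℝ)))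
        = ∑' m : ℕ, ∑' i : ℕ, ‖β i‖ * ‖x (m + i)‖ * Real.exp (-((m : ℝ) + 1) / (r : ℝ)) :=
          tsum_congr e3
      _ = ∑' i : ℕ, ∑' m : ℕ, ‖β i‖ * ‖x (m + i)‖ * Real.exp (-((m : ℝ) + 1) / (r : ℝ)) := hswap
      _ ≤ ∑' i : ℕ, ‖β i‖ * Real.exp ((i : ℝ) + 1) * lamOneNNorm r x :=
          Summable.tsum_le_tsum hinner hmarg.2 (hB.mul_right _)
      _ = Bc * lamOneNNorm r x := tsum_mul_right
  -- pointwise estimate on Toep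
  have hT : ∀ m : ℕ, ‖Toep θ β x m‖ * Real.exp (-((m : ℝ) + 1) / (r : ℝ))
      ≤ (∑ i ∈ Finset.range (m + 1), ‖θ (m - i)‖ * ‖x i‖) * Real.exp (-((m : ℝ) + 1) / (r : ℝ))
        + (∑' i : ℕ, ‖β i‖ * ‖x (m + i)‖) * Real.exp (-((m : ℝ) + 1) / (r : ℝ)) := by
    intro m
    rw [← add_mul]
    apply mul_le_mul_of_nonneg_right _ (Real.exp_nonneg _)
    show ‖(∑ i ∈ Finset.range (m + 1), θ (m - i) * x i) + ∑' i : ℕ, β i * x (m + i)‖ ≤ _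
    refine (norm_add_le _ _).trans (add_le_add ?_ ?_)
    · refine (norm_sum_le _ _).trans (le_of_eq ?_)
      exact Finset.sum_congr rfl fun i _ => norm_mul _ _
    · refine (norm_tsum_le_tsum_norm ?_).trans (le_of_eq ?_)
      · exact (hβx m).congr fun i => (norm_mul _ _).symm
      · exact tsum_congr fun i => norm_mul _ _
  have hTs : Summable fun m : ℕ => ‖Toep θ β x m‖ * Real.exp (-((m : ℝ) + 1) / (r : ℝ)) :=
    Summable.of_nonneg_of_le (fun m => by positivity) hT (ha_s.add hbms)
  refine ⟨hTs, ?_⟩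
  have hlam0 : 0 ≤ lamOneNNorm r x := tsum_nonneg fun j => by positivity
  calc lamOneNNorm r (Toep θ β x)
      = ∑' m : ℕ, ‖Toep θ β x m‖ * Real.exp (-((m : ℝ) + 1) / (r : ℝ)) := rfl
    _ ≤ ∑' m : ℕ, ((∑ i ∈ Finset.range (m + 1), ‖θ (m - i)‖ * ‖x i‖)
            * Real.exp (-((m : ℝ) + 1) / (r : ℝ))
          + (∑' i : ℕ, ‖β i‖ * ‖x (m + i)‖) * Real.exp (-((m : ℝ) + 1) / (r : ℝ))) :=
        Summable.tsum_le_tsum hT hTs (ha_s.add hbms)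
    _ = (∑' m : ℕ, (∑ i ∈ Finset.range (m + 1), ‖θ (m - i)‖ * ‖x i‖)
            * Real.exp (-((m : ℝ) + 1) / (r : ℝ)))
        + ∑' m : ℕ, (∑' i : ℕ, ‖β i‖ * ‖x (m + i)‖) * Real.exp (-((m : ℝ) + 1) / (r : ℝ)) :=
        Summable.tsum_add ha_s hbms
    _ ≤ (Real.exp (1 / (2 * (r : ℝ)))
            * (∑' i : ℕ, ‖θ i‖ * Real.exp (-((i : ℝ) + 1) / (2 * (r : ℝ))))) * lamOneNNorm r x
        + Bc * lamOneNNorm r x := add_le_add ha_val hbpart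
    _ = (Real.exp (1 / (2 * (r : ℝ)))
            * (∑' i : ℕ, ‖θ i‖ * Real.exp (-((i : ℝ) + 1) / (2 * (r : ℝ)))) + Bc)
          * lamOneNNorm r x := by ring
    _ ≤ 1 * lamOneNNorm r x := mul_le_mul_of_nonneg_right (hsm r hr) hlam0
    _ = lamOneNNorm r x := one_mul _

private lemma part1 (β : ℕ → ℂ)
    (hB : Summable fun n : ℕ => ‖β n‖ * Real.exp ((n : ℝ) + 1)) :
    ∀ p n : ℕ, 1 ≤ p → 1 ≤ n →
      ∑ j ∈ Finset.Icc 1 n, ‖β (n - j)‖ * Real.exp (-(j : ℝ) / (p : ℝ))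
        ≤ (∑' i : ℕ, ‖β i‖ * Real.exp ((i : ℝ) + 1)) * Real.exp (-(n : ℝ) / (p : ℝ)) := by
  intro p n hp hn
  have hp1 : (1:ℝ) ≤ (p:ℝ) := by exact_mod_cast hp
  calc ∑ j ∈ Finset.Icc 1 n, ‖β (n - j)‖ * Real.exp (-(j : ℝ) / (p : ℝ))
      ≤ ∑ j ∈ Finset.Icc 1 n, ‖β (n - j)‖ * Real.exp (((n:ℝ) - (j:ℝ)) + 1) * Real.exp (-(n : ℝ) / (p : ℝ)) := by
        apply Finset.sum_le_sum
        intro j hj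
        obtain ⟨hj1, hjn⟩ := Finset.mem_Icc.mp hj
        rw [mul_assoc, ← Real.exp_add]
        apply mul_le_mul_of_nonneg_left _ (norm_nonneg _)
        apply Real.exp_le_exp.mpr
        have h1 : ((n:ℝ) - (j:ℝ)) / (p:ℝ) ≤ (n:ℝ) - (j:ℝ) := by
          apply div_le_self _ hp1
          have : (j:ℝ) ≤ (n:ℝ) := by exact_mod_cast hjn
          linarith
        have h2 : ((n:ℝ) - (j:ℝ)) / (p:ℝ) = (n:ℝ)/(p:ℝ) - (j:ℝ)/(p:ℝ) := by ring
        have h3 : -(j:ℝ)/(p:ℝ) = -((j:ℝ)/(p:ℝ)) := by ring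
        have h4 : -(n:ℝ)/(p:ℝ) = -((n:ℝ)/(p:ℝ)) := by ring
        linarith
    _ = (∑ j ∈ Finset.Icc 1 n, ‖β (n - j)‖ * Real.exp (((n:ℝ) - (j:ℝ)) + 1)) * Real.exp (-(n : ℝ) / (p : ℝ)) := by
        rw [Finset.sum_mul]
    _ ≤ (∑' i : ℕ, ‖β i‖ * Real.exp ((i : ℝ) + 1)) * Real.exp (-(n : ℝ) / (p : ℝ)) := by
        apply mul_le_mul_of_nonneg_right _ (Real.exp_nonneg _)
        have heq : ∑ j ∈ Finset.Icc 1 n, ‖β (n - j)‖ * Real.exp (((n:ℝ) - (j:ℝ)) + 1)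
            = ∑ i ∈ Finset.range n, ‖β i‖ * Real.exp ((i : ℝ) + 1) := by
          apply Finset.sum_nbij' (fun j => n - j) (fun i => n - i)
          · intro a ha
            obtain ⟨h1, h2⟩ := Finset.mem_Icc.mp ha
            exact Finset.mem_range.mpr (by omega)
          · intro a ha
            have := Finset.mem_range.mp ha
            exact Finset.mem_Icc.mpr (by omega)
          · intro a ha; obtain ⟨h1, h2⟩ := Finset.mem_Icc.mp ha; omega
          · intro a ha; have := Finset.mem_range.mp ha; omega
          · intro a ha
            obtain ⟨h1, h2⟩ := Finset.mem_Icc.mp ha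
            have : ((n - a : ℕ) : ℝ) = (n:ℝ) - (a:ℝ) := by
              have : (a:ℝ) ≤ (n:ℝ) := by exact_mod_cast h2
              push_cast [Nat.cast_sub h2]
              ring
            rw [this]
        rw [heq]
        exact Summable.sum_le_tsum _ (fun i _ => by positivity) hB

/-- If B = ∑_{n≥1} |β_{n-1}| eⁿ < ∞, then `‖Ť_β e_n‖_p ≤ B ‖e_n‖_p` for all p, n, so
Ť_β is strongly tame on Λ₁(n); consequently, if moreover θ ∈ Λ₁(n) and
sup_p e^{1/(2p)}‖θ‖_{2p} + ∑_n |β_{n-1}| eⁿ ≤ 1, then the Toeplitz operator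
T_{θ,β} = T̂_θ + Ť_β on Λ₁(n) is power bounded. -/
theorem stmt_19 (β θ : ℕ → ℂ)
    (hB : Summable fun n : ℕ => ‖β n‖ * Real.exp ((n : ℝ) + 1)) :
    (∀ p n : ℕ, 1 ≤ p → 1 ≤ n →
      ∑ j ∈ Finset.Icc 1 n, ‖β (n - j)‖ * Real.exp (-(j : ℝ) / (p : ℝ))
        ≤ (∑' i : ℕ, ‖β i‖ * Real.exp ((i : ℝ) + 1)) * Real.exp (-(n : ℝ) / (p : ℝ)))
    ∧ ((∀ p : ℕ, 1 ≤ p →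
          Summable fun i : ℕ => ‖θ i‖ * Real.exp (-((i : ℝ) + 1) / (p : ℝ))) →
       (∀ p : ℕ, 1 ≤ p →
          Real.exp (1 / (2 * (p : ℝ)))
              * (∑' i : ℕ, ‖θ i‖ * Real.exp (-((i : ℝ) + 1) / (2 * (p : ℝ))))
            + (∑' i : ℕ, ‖β i‖ * Real.exp ((i : ℝ) + 1)) ≤ 1) →
       ∀ p : ℕ, 1 ≤ p → ∃ q : ℕ, 1 ≤ q ∧ ∀ k : ℕ, ∀ x : ℕ → ℂ,
         (∀ r : ℕ, 1 ≤ r →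
            Summable fun j : ℕ => ‖x j‖ * Real.exp (-((j : ℝ) + 1) / (r : ℝ))) →
         lamOneNNorm p ((Toep θ β)^[k] x) ≤ lamOneNNorm q x) := by
  constructor
  · exact part1 β hB
  · intro hθ hsm p hp
    refine ⟨p, hp, ?_⟩
    intro k x hx
    have key : ∀ k : ℕ, ∀ x : ℕ → ℂ,
        (∀ r : ℕ, 1 ≤ r →
            Summable fun j : ℕ => ‖x j‖ * Real.exp (-((j : ℝ) + 1) / (r : ℝ))) →
        (∀ r : ℕ, 1 ≤ r →
            Summable fun j : ℕ =>
              ‖((Toep θ β)^[k] x) j‖ * Real.exp (-((j : ℝ) + 1) / (r : ℝ)))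
          ∧ ∀ r : ℕ, 1 ≤ r →
              lamOneNNorm r ((Toep θ β)^[k] x) ≤ lamOneNNorm r x := by
      intro k
      induction k with
      | zero =>
        intro x hx
        exact ⟨hx, fun r _ => le_rfl⟩
      | succ k ih =>
        intro x hx
        obtain ⟨ih1, ih2⟩ := ih x hx
        have hstep := fun r hr =>
          toep_contract β θ hB hθ hsm ((Toep θ β)^[k] x) ih1 r hr
        constructor
        · intro r hr
          rw [Function.iterate_succ_apply']
          exact (hstep r hr).1
        · intro r hr
          rw [Function.iterate_succ_apply']
          exact le_trans (hstep r hr).2 (ih2 r hr)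
    exact (key k x hx).2 p hp
end
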